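/- For any monoid S, every automorphism of the category _S𝒜⁰ of finitely generated free left S-acts is semi-inner. -/

import Mathlib

open CategoryTheory

/-- `f : S × X → S × Y` is a homomorphism of free left `S`-acts, where the action of
`S` on `S × X` is `s • (t, x) = (s * t, x)`. -/
def IsActHom (S : Type) [Monoid S] {X Y : Type} (f : S × X → S × Y) : Prop :=
  ∀ (s : S) (p : S × X), f (s * p.1, p.2) = (s * (f p).1, (f p).2)

/-- Objects of the category `_S𝒜⁰` of finitely generated free left `S`-acts:
the free `S`-act on a finite set `X`, with carrier `S × X`. -/
structure FreeAct (S : Type) [Monoid S] : Type 1 where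
  X : Type
  finX : Finite X

/-- The category `_S𝒜⁰`: morphisms are the `S`-equivariant maps. -/
instance (S : Type) [Monoid S] : Category (FreeAct S) where
  Hom A B := {f : S × A.X → S × B.X // IsActHom S f}
  id A := ⟨fun p => p, fun _ _ => rfl⟩
  comp f g := ⟨fun p => g.1 (f.1 p), fun s p => by
    show g.1 (f.1 (s * p.1, p.2)) = _; rw [f.2 s p]; exact g.2 s (f.1 p)⟩

/-- An automorphism of a category `C`: a functor `C ⥤ C` admitting a functor `ψ` with
`φ ⋙ ψ` and `ψ ⋙ φ` equal (not merely isomorphic) to the identity functor. -/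
def IsCatAutomorphism {C : Type*} [Category C] (φ : C ⥤ C) : Prop :=
  ∃ ψ : C ⥤ C, φ ⋙ ψ = 𝟭 C ∧ ψ ⋙ φ = 𝟭 C

/-- An automorphism `φ` of `_S𝒜⁰` is *semi-inner with associated monoid automorphism `σ`*
if there is a family of bijections `s_F : F ≃ φ(F)` that are `σ`-semilinear,
i.e. `s_F (s • a) = σ s • s_F a`, and commute with all morphisms:
`φ(f) ∘ s_F = s_{F\'} ∘ f`. -/
def SemiInnerWith (S : Type) [Monoid S] (φ : FreeAct S ⥤ FreeAct S) (σ : S ≃* S) : Prop :=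
  ∃ e : ∀ A : FreeAct S, (S × A.X) ≃ (S × (φ.obj A).X),
    (∀ (A : FreeAct S) (s : S) (p : S × A.X),
        e A (s * p.1, p.2) = (σ s * (e A p).1, (e A p).2)) ∧
    ∀ {A B : FreeAct S} (f : A ⟶ B) (p : S × A.X), (φ.map f).1 (e A p) = e B (f.1 p)

/-- An automorphism of `_S𝒜⁰` is *semi-inner* if it is semi-inner with respect to some
monoid automorphism of `S`. -/
def SemiInner (S : Type) [Monoid S] (φ : FreeAct S ⥤ FreeAct S) : Prop :=
  ∃ σ : S ≃* S, SemiInnerWith S φ σ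


namespace AutoSemiInnerAux

variable {S : Type} [Monoid S]

/-- The free act on one generator. -/
def A1 (S : Type) [Monoid S] : FreeAct S := ⟨PUnit, inferInstance⟩

/-- The initial (empty) free act. -/
def Z0 (S : Type) [Monoid S] : FreeAct S := ⟨Empty, inferInstance⟩

/-- The morphism sending `(t, x)` to `(t * q.1, q.2)` (constant in `x`). -/
def genHom {A B : FreeAct S} (q : S × B.X) : A ⟶ B :=
  ⟨fun p => (p.1 * q.1, q.2), fun s p => by simp [mul_assoc]⟩

lemma genHom_val {A B : FreeAct S} (q : S × B.X) (p : S × A.X) :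
    (genHom (A := A) q).1 p = (p.1 * q.1, q.2) := rfl

lemma comp_val {A B C : FreeAct S} (f : A ⟶ B) (g : B ⟶ C) (p : S × A.X) :
    (f ≫ g).1 p = g.1 (f.1 p) := rfl

lemma id_val (A : FreeAct S) (p : S × A.X) : (𝟙 A : A ⟶ A).1 p = p := rfl

lemma heval {A B : FreeAct S} (f : A ⟶ B) (t : S) (x : A.X) :
    f.1 (t, x) = (t * (f.1 (1, x)).1, (f.1 (1, x)).2) := by
  have h := f.2 t (1, x)
  simpa using h

/-- Morphisms out of a rank-one free act are determined by the value at `(1, x)`. -/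
lemma punit_ext : ∀ a b : (A1 S).X, a = b := fun a b => by cases a; cases b; rfl

lemma hom_ext {A B : FreeAct S} (hA : ∀ a b : A.X, a = b) {f g : A ⟶ B} (x : A.X)
    (h : f.1 (1, x) = g.1 (1, x)) : f = g := by
  apply Subtype.ext
  funext p
  obtain ⟨t, y⟩ := p
  rw [hA y x, heval f t x, heval g t x, h]

end AutoSemiInnerAux

/-- **Theorem 7.** For any monoid `S`, every automorphism of the category
`_S𝒜⁰` of finitely generated free left `S`-acts is semi-inner. -/
theorem automorphism_semiInner (S : Type) [Monoid S]
    (φ : FreeAct S ⥤ FreeAct S) (hφ : IsCatAutomorphism φ) :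
    SemiInner S φ := by
  classical
  open AutoSemiInnerAux in
  obtain ⟨ψ, h1, h2⟩ := hφ
  have hobj1 : ∀ A : FreeAct S, ψ.obj (φ.obj A) = A := fun A => Functor.congr_obj h1 A
  have hobj2 : ∀ A : FreeAct S, φ.obj (ψ.obj A) = A := fun A => Functor.congr_obj h2 A
  -- φ is injective on morphisms
  have hinj : ∀ {A B : FreeAct S} {f g : A ⟶ B}, φ.map f = φ.map g → f = g := by
    intro A B f g h
    have hf := Functor.congr_hom h1 f
    have hg := Functor.congr_hom h1 g
    simp only [Functor.comp_map, Functor.id_map] at hf hg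
    have hf' : f = eqToHom (Functor.congr_obj h1 A).symm ≫ ψ.map (φ.map f) ≫
        eqToHom (Functor.congr_obj h1 B) := by rw [hf]; simp
    have hg' : g = eqToHom (Functor.congr_obj h1 A).symm ≫ ψ.map (φ.map g) ≫
        eqToHom (Functor.congr_obj h1 B) := by rw [hg]; simp
    rw [hf', hg', h]
  -- φ is surjective on morphisms
  have hsurj : ∀ {A B : FreeAct S} (g : φ.obj A ⟶ φ.obj B), ∃ f : A ⟶ B, φ.map f = g := by
    intro A B g
    refine ⟨eqToHom (hobj1 A).symm ≫ ψ.map g ≫ eqToHom (hobj1 B), ?_⟩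
    have hg := Functor.congr_hom h2 g
    simp only [Functor.comp_map, Functor.id_map] at hg
    simp [hg, eqToHom_map]
  -- the generating set of `φ.obj (A1 S)` is nonempty
  have hne1 : Nonempty (φ.obj (A1 S)).X := by
    by_contra hemp
    have hempty : (φ.obj (A1 S)).X → False := fun y => hemp ⟨y⟩
    obtain ⟨f, -⟩ := hsurj (A := A1 S) (B := Z0 S)
      ⟨fun p => (hempty p.2).elim, fun s p => (hempty p.2).elim⟩
    exact (f.1 (1, PUnit.unit)).2.elim
  -- the generating set of `ψ.obj (A1 S)` is nonempty
  have hne2 : Nonempty (ψ.obj (A1 S)).X := by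
    by_contra hemp
    have hempty : (ψ.obj (A1 S)).X → False := fun y => hemp ⟨y⟩
    have f : A1 S ⟶ Z0 S :=
      eqToHom (hobj2 (A1 S)).symm ≫
        φ.map (⟨fun p => (hempty p.2).elim, fun s p => (hempty p.2).elim⟩ :
          ψ.obj (A1 S) ⟶ ψ.obj (Z0 S)) ≫ eqToHom (hobj2 (Z0 S))
    exact (f.1 (1, PUnit.unit)).2.elim
  -- the generating set of `φ.obj (A1 S)` is a subsingleton
  have hss : ∀ a b : (φ.obj (A1 S)).X, a = b := by
    obtain ⟨y0⟩ := hne2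
    have hir : (genHom ((1 : S), y0) : A1 S ⟶ ψ.obj (A1 S)) ≫
        (⟨fun p => (p.1, PUnit.unit), fun s p => rfl⟩ : ψ.obj (A1 S) ⟶ A1 S) = 𝟙 (A1 S) := by
      apply Subtype.ext
      funext p
      obtain ⟨t, x⟩ := p
      cases x
      show (t * 1, PUnit.unit) = (t, PUnit.unit)
      rw [mul_one]
    set r' : A1 S ⟶ φ.obj (A1 S) := eqToHom (hobj2 (A1 S)).symm ≫
      φ.map (⟨fun p => (p.1, PUnit.unit), fun s p => rfl⟩ : ψ.obj (A1 S) ⟶ A1 S) with hr'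
    have hsplit : (φ.map (genHom ((1 : S), y0) : A1 S ⟶ ψ.obj (A1 S)) ≫
        eqToHom (hobj2 (A1 S))) ≫ r' = 𝟙 (φ.obj (A1 S)) := by
      rw [hr']
      simp only [Category.assoc, eqToHom_trans_assoc, eqToHom_refl, Category.id_comp]
      rw [← φ.map_comp, hir, CategoryTheory.Functor.map_id]
    have hsur' : ∀ q : S × (φ.obj (A1 S)).X, ∃ p : S × PUnit, r'.1 p = q := by
      intro q
      refine ⟨(φ.map (genHom ((1 : S), y0) : A1 S ⟶ ψ.obj (A1 S)) ≫
        eqToHom (hobj2 (A1 S))).1 q, ?_⟩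
      have := congrFun (congrArg Subtype.val hsplit) q
      exact this
    have hconst : ∀ p : S × PUnit, (r'.1 p).2 = (r'.1 (1, PUnit.unit)).2 := by
      intro p
      obtain ⟨t, x⟩ := p
      cases x
      have hh := heval r' t PUnit.unit
      have h3 := congrArg Prod.snd hh
      exact h3
    intro a b
    obtain ⟨pa, hpa⟩ := hsur' (1, a)
    obtain ⟨pb, hpb⟩ := hsur' (1, b)
    have ha : a = (r'.1 pa).2 := by rw [hpa]
    have hb : b = (r'.1 pb).2 := by rw [hpb]
    rw [ha, hb, hconst pa, hconst pb]
  obtain ⟨x0⟩ := hne1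
  -- the monoid map σ₀
  set σ0 : S → S := fun s =>
    ((φ.map (genHom (A := A1 S) (B := A1 S) (s, PUnit.unit))).1 (1, x0)).1 with hσ0
  have hφm : ∀ s : S,
      (φ.map (genHom (A := A1 S) (B := A1 S) (s, PUnit.unit))).1 (1, x0) = (σ0 s, x0) := by
    intro s
    exact Prod.ext rfl (hss _ _)
  have hmulm : ∀ s t : S,
      (genHom (A := A1 S) (B := A1 S) (s * t, PUnit.unit)) =
      genHom (A := A1 S) (B := A1 S) (s, PUnit.unit) ≫ genHom (A := A1 S) (B := A1 S) (t, PUnit.unit) := by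
    intro s t
    refine hom_ext punit_ext PUnit.unit ?_
    rw [comp_val, genHom_val, genHom_val, genHom_val]
    simp [mul_assoc]
  have hσmul : ∀ s t : S, σ0 (s * t) = σ0 s * σ0 t := by
    intro s t
    rw [hσ0]
    simp only
    rw [hmulm s t, Functor.map_comp, comp_val, hφm s, heval _ (σ0 s) x0, hφm t]
  have hσone : σ0 1 = 1 := by
    have hone : (genHom (A := A1 S) (B := A1 S) ((1 : S), PUnit.unit)) = 𝟙 (A1 S) := by
      refine hom_ext punit_ext PUnit.unit ?_
      rw [genHom_val, id_val, mul_one]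
    rw [hσ0]
    simp only
    rw [hone, CategoryTheory.Functor.map_id, id_val]
  have hσinj : Function.Injective σ0 := by
    intro s t h
    have h1' : (φ.map (genHom (A := A1 S) (B := A1 S) (s, PUnit.unit))).1 (1, x0) =
        (φ.map (genHom (A := A1 S) (B := A1 S) (t, PUnit.unit))).1 (1, x0) := by
      rw [hφm s, hφm t, h]
    have h2' := hinj (hom_ext hss x0 h1')
    have := congrFun (congrArg Subtype.val h2') (1, PUnit.unit)
    rw [genHom_val, genHom_val] at this
    have := congrArg Prod.fst this
    simpa using this
  have hσsurj : Function.Surjective σ0 := by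
    intro t
    obtain ⟨f, hf⟩ := hsurj (A := A1 S) (B := A1 S)
      (genHom (A := φ.obj (A1 S)) (t, x0))
    refine ⟨(f.1 (1, PUnit.unit)).1, ?_⟩
    have hfm : genHom (A := A1 S) (B := A1 S) ((f.1 (1, PUnit.unit)).1, PUnit.unit) = f := by
      refine hom_ext punit_ext PUnit.unit ?_
      rw [genHom_val, one_mul]
      exact Prod.ext rfl (punit_ext _ _)
    rw [hσ0]
    simp only
    rw [hfm, hf, genHom_val]
    simp
  set σ : S ≃* S := MulEquiv.ofBijective
    ({ toFun := σ0, map_one' := hσone, map_mul' := hσmul } : S →* S) ⟨hσinj, hσsurj⟩ with hσ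
  have hσval : ∀ s : S, σ s = σ0 s := fun s => rfl
  -- the bijections
  set E : ∀ A : FreeAct S, S × A.X → S × (φ.obj A).X := fun A p =>
    (φ.map (genHom (A := A1 S) p)).1 (1, x0) with hE
  have hEinj : ∀ A : FreeAct S, Function.Injective (E A) := by
    intro A p q h
    have h2' := hinj (hom_ext hss x0 h)
    have := congrFun (congrArg Subtype.val h2') (1, PUnit.unit)
    rw [genHom_val, genHom_val, one_mul, one_mul] at this
    obtain ⟨p1, p2⟩ := p
    obtain ⟨q1, q2⟩ := q
    exact this
  have hEsurj : ∀ A : FreeAct S, Function.Surjective (E A) := by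
    intro A q
    obtain ⟨f, hf⟩ := hsurj (A := A1 S) (B := A)
      (genHom (A := φ.obj (A1 S)) q)
    refine ⟨f.1 (1, PUnit.unit), ?_⟩
    have hfm : genHom (A := A1 S) (f.1 (1, PUnit.unit)) = f := by
      refine hom_ext punit_ext PUnit.unit ?_
      rw [genHom_val, one_mul]
    rw [hE]
    simp only
    rw [hfm, hf, genHom_val, one_mul]
  have hEsemi : ∀ (A : FreeAct S) (s : S) (p : S × A.X),
      E A (s * p.1, p.2) = (σ0 s * (E A p).1, (E A p).2) := by
    intro A s p
    have hcomp : (genHom (A := A1 S) ((s * p.1, p.2) : S × A.X)) =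
        genHom (A := A1 S) (B := A1 S) (s, PUnit.unit) ≫ genHom p := by
      refine hom_ext punit_ext PUnit.unit ?_
      rw [comp_val, genHom_val, genHom_val, genHom_val]
      simp [mul_assoc]
    rw [hE]
    simp only
    rw [hcomp, Functor.map_comp, comp_val, hφm s, heval _ (σ0 s) x0]
  have hEnat : ∀ {A B : FreeAct S} (f : A ⟶ B) (p : S × A.X),
      (φ.map f).1 (E A p) = E B (f.1 p) := by
    intro A B f p
    have hcomp : (genHom (A := A1 S) p) ≫ f = genHom (A := A1 S) (f.1 p) := by
      refine hom_ext punit_ext PUnit.unit ?_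
      obtain ⟨p1, p2⟩ := p
      rw [comp_val, genHom_val, genHom_val, one_mul, one_mul]
    rw [hE]
    simp only
    rw [← comp_val, ← Functor.map_comp, hcomp]
  refine ⟨σ, fun A => Equiv.ofBijective (E A) ⟨hEinj A, hEsurj A⟩, ?_, ?_⟩
  · intro A s p
    show E A (s * p.1, p.2) = (σ s * (E A p).1, (E A p).2)
    rw [hσval, hEsemi]
  · intro A B f p
    show (φ.map f).1 (E A p) = E B (f.1 p)
    exact hEnat f p
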